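/- Let B_l, for l ∈ ℤ, be independent Bernoulli random variables with Pr{B_l = 1} = 1/(1 + e^{λ 2^l}) for a fixed λ > 0. Then the random variable B = Σ_{l=-∞}^{∞} 2^l B_l is exponentially distributed with rate λ (mean 1/λ). -/

import Mathlib

open MeasureTheory ProbabilityTheory
open Real Set Filter Topology
open scoped NNReal ENNReal

lemma aux_weierstrass (f : ℝ → ℝ) (hf : Continuous f) {ε : ℝ} (hε : 0 < ε) :
    ∃ p : Polynomial ℝ, ∀ x ∈ Set.Icc (0:ℝ) 1, |f x - p.eval x| < ε := by
  set F : C(Set.Icc (0:ℝ) 1, ℝ) := ContinuousMap.restrict (Set.Icc (0:ℝ) 1) ⟨f, hf⟩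
  have hFmem : F ∈ closure ((polynomialFunctions (Set.Icc (0:ℝ) 1)) : Set C(Set.Icc (0:ℝ) 1, ℝ)) := by
    rw [← Subalgebra.topologicalClosure_coe, polynomialFunctions_closure_eq_top 0 1]
    trivial
  rw [Metric.mem_closure_iff] at hFmem
  obtain ⟨g, hg, hdist⟩ := hFmem ε hε
  rw [polynomialFunctions_coe] at hg
  obtain ⟨p, rfl⟩ := hg
  refine ⟨p, fun x hx => ?_⟩
  have h1 : |f x - p.eval x| = dist (F ⟨x, hx⟩) ((Polynomial.toContinuousMapOnAlgHom (Set.Icc (0:ℝ) 1)) p ⟨x, hx⟩) := by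
    simp [F, Real.dist_eq, Polynomial.toContinuousMapOnAlgHom]
  rw [h1]
  exact lt_of_le_of_lt (ContinuousMap.dist_apply_le_dist _) hdist

lemma aux_integrable_of_ae_Icc (ν : Measure ℝ) [IsProbabilityMeasure ν]
    (hae : ∀ᵐ t ∂ν, t ∈ Set.Icc (0:ℝ) 1) {g : ℝ → ℝ} (hg : Continuous g) :
    Integrable g ν := by
  obtain ⟨C, hC⟩ := isCompact_Icc.exists_bound_of_continuousOn (hg.continuousOn (s := Set.Icc (0:ℝ) 1))
  exact (integrable_const C).mono' hg.aestronglyMeasurable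
    (by filter_upwards [hae] with t ht using hC t ht)

lemma aux_poly_integral (ν : Measure ℝ) [IsProbabilityMeasure ν]
    (hae : ∀ᵐ t ∂ν, t ∈ Set.Icc (0:ℝ) 1) (p : Polynomial ℝ) :
    ∫ t, p.eval t ∂ν = ∑ i ∈ Finset.range (p.natDegree + 1), p.coeff i * ∫ t, t ^ i ∂ν := by
  have h : ∀ t : ℝ, p.eval t = ∑ i ∈ Finset.range (p.natDegree + 1), p.coeff i * t ^ i := by
    intro t; rw [Polynomial.eval_eq_sum_range]
  simp_rw [h]
  rw [integral_finset_sum]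
  · exact Finset.sum_congr rfl fun i _ => by rw [integral_const_mul]
  · exact fun i _ => (aux_integrable_of_ae_Icc ν hae (continuous_pow i)).const_mul _

lemma aux_integral_eq_of_ae_Icc (ν₁ ν₂ : Measure ℝ) [IsProbabilityMeasure ν₁] [IsProbabilityMeasure ν₂]
    (hae₁ : ∀ᵐ t ∂ν₁, t ∈ Set.Icc (0:ℝ) 1) (hae₂ : ∀ᵐ t ∂ν₂, t ∈ Set.Icc (0:ℝ) 1)
    (hmom : ∀ n : ℕ, ∫ t, t ^ n ∂ν₁ = ∫ t, t ^ n ∂ν₂)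
    {g : ℝ → ℝ} (hg : Continuous g) : ∫ t, g t ∂ν₁ = ∫ t, g t ∂ν₂ := by
  have hpoly : ∀ p : Polynomial ℝ, ∫ t, p.eval t ∂ν₁ = ∫ t, p.eval t ∂ν₂ := by
    intro p
    rw [aux_poly_integral ν₁ hae₁ p, aux_poly_integral ν₂ hae₂ p]
    exact Finset.sum_congr rfl fun i _ => by rw [hmom i]
  have key : ∀ ε > 0, |∫ t, g t ∂ν₁ - ∫ t, g t ∂ν₂| ≤ 2 * ε := by
    intro ε hε
    obtain ⟨p, hp⟩ := aux_weierstrass g hg hε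
    have hpc : Continuous fun t : ℝ => p.eval t := p.continuous
    have hint : ∀ (ν : Measure ℝ) (_ : IsProbabilityMeasure ν) (_ : ∀ᵐ t ∂ν, t ∈ Set.Icc (0:ℝ) 1),
        |∫ t, g t ∂ν - ∫ t, p.eval t ∂ν| ≤ ε := by
      intro ν hν hae
      have hig := aux_integrable_of_ae_Icc ν hae hg
      have hip := aux_integrable_of_ae_Icc ν hae hpc
      rw [← integral_sub hig hip]
      calc |∫ t, (g t - p.eval t) ∂ν| ≤ ∫ t, |g t - p.eval t| ∂ν := by
            simpa [Real.norm_eq_abs] using norm_integral_le_integral_norm (fun t => g t - p.eval t) (μ := ν)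
        _ ≤ ∫ _t, ε ∂ν := integral_mono_ae (hig.sub hip).abs (integrable_const ε)
            (by filter_upwards [hae] with t ht using le_of_lt (hp t ht))
        _ = ε := by simp
    calc |∫ t, g t ∂ν₁ - ∫ t, g t ∂ν₂|
        = |(∫ t, g t ∂ν₁ - ∫ t, p.eval t ∂ν₁) - (∫ t, g t ∂ν₂ - ∫ t, p.eval t ∂ν₂)| := by
          rw [hpoly p]; ring_nf
      _ ≤ |∫ t, g t ∂ν₁ - ∫ t, p.eval t ∂ν₁| + |∫ t, g t ∂ν₂ - ∫ t, p.eval t ∂ν₂| :=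
          abs_sub _ _
      _ ≤ ε + ε := add_le_add (hint ν₁ ‹_› hae₁) (hint ν₂ ‹_› hae₂)
      _ = 2 * ε := by ring
  by_contra h
  have h2 : 0 < |∫ t, g t ∂ν₁ - ∫ t, g t ∂ν₂| := abs_pos.mpr (sub_ne_zero.mpr h)
  have := key (|∫ t, g t ∂ν₁ - ∫ t, g t ∂ν₂| / 4) (by linarith)
  linarith

/-- Laplace transform uniqueness for probability measures on `[0, ∞)`. -/
lemma aux_laplace_unique (μ ν : Measure ℝ) [IsProbabilityMeasure μ] [IsProbabilityMeasure ν]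
    (hμ0 : μ (Set.Iio 0) = 0) (hν0 : ν (Set.Iio 0) = 0)
    (h : ∀ n : ℕ, ∫ x, Real.exp (-(n:ℝ) * x) ∂μ = ∫ x, Real.exp (-(n:ℝ) * x) ∂ν) :
    μ = ν := by
  set Φ : ℝ → ℝ := fun x => Real.exp (-x) with hΦ
  have hΦc : Continuous Φ := Real.continuous_exp.comp continuous_neg
  have hΦinj : Function.Injective Φ := fun a b hab => by
    simpa using Real.exp_injective hab
  have hΦemb : MeasurableEmbedding Φ := hΦc.measurable.measurableEmbedding hΦinj
  have hsupp : ∀ (κ : Measure ℝ), κ (Set.Iio 0) = 0 → ∀ᵐ t ∂(κ.map Φ), t ∈ Set.Icc (0:ℝ) 1 := by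
    intro κ hκ
    have hms : MeasurableSet {t : ℝ | t ∉ Set.Icc (0:ℝ) 1} := (measurableSet_Icc (a := (0:ℝ)) (b := 1)).compl
    rw [ae_iff]
    rw [Measure.map_apply hΦc.measurable hms]
    refine measure_mono_null (fun x hx => ?_) hκ
    simp only [Set.mem_setOf_eq, Set.mem_preimage, Set.mem_Icc, not_and_or, not_le] at hx
    rcases hx with hx | hx
    · exact absurd (le_of_lt (Real.exp_pos _)) (not_le.mpr hx)
    · simp only [Set.mem_Iio]
      by_contra hx0
      exact absurd (Real.exp_le_one_iff.mpr (by simp; linarith [not_lt.mp hx0])) (not_le.mpr hx)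
  haveI : IsProbabilityMeasure (μ.map Φ) := Measure.isProbabilityMeasure_map hΦc.measurable.aemeasurable
  haveI : IsProbabilityMeasure (ν.map Φ) := Measure.isProbabilityMeasure_map hΦc.measurable.aemeasurable
  have hmom : ∀ n : ℕ, ∫ t, t ^ n ∂(μ.map Φ) = ∫ t, t ^ n ∂(ν.map Φ) := by
    intro n
    rw [integral_map hΦc.measurable.aemeasurable (continuous_pow n).aestronglyMeasurable,
      integral_map hΦc.measurable.aemeasurable (continuous_pow n).aestronglyMeasurable]
    have : ∀ x : ℝ, Φ x ^ n = Real.exp (-(n:ℝ) * x) := by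
      intro x
      rw [hΦ, ← Real.exp_nat_mul]
      ring_nf
    simp_rw [this]
    exact h n
  have hcont : ∀ {g : ℝ → ℝ}, Continuous g → ∫ t, g t ∂(μ.map Φ) = ∫ t, g t ∂(ν.map Φ) :=
    fun hg => aux_integral_eq_of_ae_Icc _ _ (hsupp μ hμ0) (hsupp ν hν0) hmom hg
  have hmaps : μ.map Φ = ν.map Φ := by
    apply ext_of_forall_lintegral_eq_of_IsFiniteMeasure
    intro f
    have hfc : Continuous fun x : ℝ => ((f x : ℝ≥0) : ℝ) := NNReal.continuous_coe.comp f.continuous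
    rw [lintegral_coe_eq_integral _ (aux_integrable_of_ae_Icc _ (hsupp μ hμ0) hfc),
      lintegral_coe_eq_integral _ (aux_integrable_of_ae_Icc _ (hsupp ν hν0) hfc),
      hcont hfc]
  ext s _hs
  have := congrArg (fun m : Measure ℝ => m (Φ '' s)) hmaps
  simp only [hΦemb.map_apply] at this
  rwa [Set.preimage_image_eq s hΦinj] at this

lemma aux_expMeasure_eq (r : ℝ) :
    expMeasure r = MeasureTheory.volume.withDensity (exponentialPDF r) := rfl

lemma aux_exp_Iio (lam : ℝ) : expMeasure lam (Set.Iio 0) = 0 := by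
  rw [aux_expMeasure_eq, withDensity_apply _ measurableSet_Iio]
  exact lintegral_exponentialPDF_of_nonpos le_rfl

lemma aux_measurable_exponentialPDF (r : ℝ) : Measurable (exponentialPDF r) :=
  ENNReal.measurable_ofReal.comp (measurable_exponentialPDFReal r)

lemma aux_exp_laplace (lam : ℝ) (hlam : 0 < lam) (s : ℝ) (hs : 0 ≤ s) :
    ∫ x, Real.exp (-s * x) ∂(expMeasure lam) = lam / (lam + s) := by
  have hls : 0 < lam + s := by linarith
  have hcont : Continuous fun x : ℝ => Real.exp (-s * x) :=
    Real.continuous_exp.comp (continuous_const.mul continuous_id)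
  have hms : Measurable fun x : ℝ => ENNReal.ofReal (Real.exp (-s * x)) :=
    ENNReal.measurable_ofReal.comp hcont.measurable
  rw [integral_eq_lintegral_of_nonneg_ae (Filter.Eventually.of_forall fun x => (Real.exp_pos _).le)
    hcont.aestronglyMeasurable]
  have key : ∫⁻ x, ENNReal.ofReal (Real.exp (-s * x)) ∂(expMeasure lam)
      = ENNReal.ofReal (lam / (lam + s)) := by
    rw [aux_expMeasure_eq, lintegral_withDensity_eq_lintegral_mul _ (aux_measurable_exponentialPDF lam) hms]
    have hpt : ∀ x : ℝ, (exponentialPDF lam * fun x => ENNReal.ofReal (Real.exp (-s * x))) x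
        = ENNReal.ofReal (lam / (lam + s)) * exponentialPDF (lam + s) x := by
      intro x
      rcases le_or_gt 0 x with hx | hx
      · simp only [Pi.mul_apply, exponentialPDF_of_nonneg hx]
        rw [← ENNReal.ofReal_mul (by positivity), ← ENNReal.ofReal_mul (by positivity)]
        congr 1
        have hexp : rexp (-(lam*x)) * rexp (-s*x) = rexp (-((lam+s)*x)) := by
          rw [← Real.exp_add]; ring_nf
        rw [mul_assoc, hexp]
        field_simp
      · simp only [Pi.mul_apply, exponentialPDF_of_neg hx, zero_mul, mul_zero]
    simp_rw [hpt]
    rw [lintegral_const_mul _ (aux_measurable_exponentialPDF (lam + s)),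
      lintegral_exponentialPDF_eq_one hls, mul_one]
  rw [key, ENNReal.toReal_ofReal (by positivity)]

noncomputable def auxg (lam s : ℝ) (m : ℤ) : ℝ :=
  (Real.exp (lam * 2 ^ m) - Real.exp (-s * 2 ^ m)) / (Real.exp (lam * 2 ^ m) - 1)

noncomputable def auxc (lam s : ℝ) (l : ℤ) : ℝ :=
  (Real.exp (lam * 2 ^ l) + Real.exp (-s * 2 ^ l)) / (1 + Real.exp (lam * 2 ^ l))

lemma auxE_gt_one {lam : ℝ} (hlam : 0 < lam) (m : ℤ) : 1 < Real.exp (lam * 2 ^ m) := by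
  rw [← Real.exp_zero]
  exact Real.exp_lt_exp.mpr (by positivity)

lemma auxb_le_one {s : ℝ} (hs : 0 ≤ s) (m : ℤ) : Real.exp (-s * 2 ^ m) ≤ 1 := by
  rw [← Real.exp_zero]
  refine Real.exp_le_exp.mpr ?_
  have : (0:ℝ) ≤ s * 2 ^ m := by positivity
  linarith

lemma auxg_pos {lam s : ℝ} (hlam : 0 < lam) (hs : 0 ≤ s) (m : ℤ) : 0 < auxg lam s m := by
  have h1 := auxE_gt_one hlam m
  have h2 := auxb_le_one hs m
  exact div_pos (by linarith) (by linarith)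

lemma auxg_eq {lam s : ℝ} (hlam : 0 < lam) (m : ℤ) : auxg lam s m
    = 1 + (1 - Real.exp (-s * 2 ^ m)) / (Real.exp (lam * 2 ^ m) - 1) := by
  have h1 := auxE_gt_one hlam m
  have h2 : Real.exp (lam * 2 ^ m) - 1 ≠ 0 := by intro h; rw [sub_eq_zero] at h; linarith
  rw [auxg]
  field_simp
  ring

lemma auxc_eq {lam s : ℝ} (hlam : 0 < lam) (hs : 0 ≤ s) (l : ℤ) :
    auxc lam s l = auxg lam s (l + 1) / auxg lam s l := by
  set a := Real.exp (lam * 2 ^ l) with ha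
  set b := Real.exp (-s * 2 ^ l) with hb
  have ha1 : 1 < a := auxE_gt_one hlam l
  have hb0 : 0 < b := Real.exp_pos _
  have hb1 : b ≤ 1 := auxb_le_one hs l
  have e1 : Real.exp (lam * 2 ^ (l+1)) = a * a := by
    rw [ha, ← Real.exp_add]
    congr 1
    rw [zpow_add_one₀ (by norm_num : (2:ℝ) ≠ 0)]
    ring
  have e2 : Real.exp (-s * 2 ^ (l+1)) = b * b := by
    rw [hb, ← Real.exp_add]
    congr 1
    rw [zpow_add_one₀ (by norm_num : (2:ℝ) ≠ 0)]
    ring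
  rw [auxc, auxg, auxg, e1, e2, ← ha, ← hb]
  rw [div_div_div_comm]
  have h1 : a * a - 1 ≠ 0 := by nlinarith
  have h2 : a - 1 ≠ 0 := by intro h; rw [sub_eq_zero] at h; linarith
  have h3 : a - b ≠ 0 := by intro h; rw [sub_eq_zero] at h; linarith
  have h4 : (1:ℝ) + a ≠ 0 := by linarith
  have h1' : a ^ 2 - 1 ≠ 0 := by nlinarith
  field_simp
  ring

lemma auxprod {lam s : ℝ} (hlam : 0 < lam) (hs : 0 ≤ s) (k : ℕ) :
    ∏ l ∈ Finset.Icc (-(k:ℤ)) (k:ℤ), auxc lam s l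
    = auxg lam s ((k:ℤ)+1) / auxg lam s (-(k:ℤ)) := by
  induction k with
  | zero => simp [auxc_eq hlam hs 0]
  | succ k ih =>
    have hset : Finset.Icc (-(k+1:ℤ)) ((k+1:ℤ)) =
        insert (-(k+1:ℤ)) (insert ((k+1:ℤ)) (Finset.Icc (-(k:ℤ)) (k:ℤ))) := by
      ext x; simp; omega
    have hmem1 : (-(k+1:ℤ)) ∉ insert ((k+1:ℤ)) (Finset.Icc (-(k:ℤ)) (k:ℤ)) := by simp; omega
    have hmem2 : ((k+1:ℤ)) ∉ Finset.Icc (-(k:ℤ)) (k:ℤ) := by simp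
    push_cast
    rw [hset, Finset.prod_insert hmem1, Finset.prod_insert hmem2, ih]
    rw [auxc_eq hlam hs, auxc_eq hlam hs]
    have g1 := auxg_pos hlam hs (-(k+1:ℤ))
    have g2 := auxg_pos hlam hs (-(k:ℤ))
    have g3 := auxg_pos hlam hs ((k:ℤ)+1)
    have g4 := auxg_pos hlam hs ((k:ℤ)+2)
    have e1 : (-(k+1:ℤ)) + 1 = -(k:ℤ) := by ring
    have e2 : ((k+1:ℤ)) + 1 = (k:ℤ)+2 := by ring
    rw [e1, e2]
    field_simp

lemma auxlim1 {lam s : ℝ} (hlam : 0 < lam) (hs : 0 ≤ s) :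
    Filter.Tendsto (fun k : ℕ => auxg lam s ((k:ℤ)+1)) atTop (𝓝 1) := by
  have hE : Filter.Tendsto (fun k : ℕ => Real.exp (lam * 2 ^ ((k:ℤ)+1)) - 1) atTop atTop := by
    have h2 : Filter.Tendsto (fun k : ℕ => (2:ℝ)^k) atTop atTop :=
      tendsto_pow_atTop_atTop_of_one_lt one_lt_two
    have h3 : Filter.Tendsto (fun k : ℕ => (2*lam) * (2:ℝ)^k) atTop atTop :=
      h2.const_mul_atTop (by positivity)
    have h4 : Filter.Tendsto (fun k : ℕ => lam * 2 ^ ((k:ℤ)+1)) atTop atTop := by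
      refine h3.congr fun k => ?_
      rw [zpow_add_one₀ (by norm_num : (2:ℝ) ≠ 0), zpow_natCast]
      ring
    have h5 := Real.tendsto_exp_atTop.comp h4
    have := tendsto_atTop_add_const_right atTop (-1) h5
    refine this.congr fun k => ?_
    simp [sub_eq_add_neg, Function.comp]
  have hupper : Filter.Tendsto (fun k : ℕ =>
      1 / (Real.exp (lam * 2 ^ ((k:ℤ)+1)) - 1)) atTop (𝓝 0) := by
    simpa [one_div, Function.comp_def] using tendsto_inv_atTop_zero.comp hE
  have hmain : Filter.Tendsto (fun k : ℕ =>
      (1 - Real.exp (-s * 2 ^ ((k:ℤ)+1))) / (Real.exp (lam * 2 ^ ((k:ℤ)+1)) - 1)) atTop (𝓝 0) := by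
    refine tendsto_of_tendsto_of_tendsto_of_le_of_le tendsto_const_nhds hupper
      (fun k => ?_) (fun k => ?_)
    · have h1 := auxE_gt_one hlam ((k:ℤ)+1)
      have h2 := auxb_le_one hs ((k:ℤ)+1)
      exact div_nonneg (by linarith) (by linarith)
    · have h1 := auxE_gt_one hlam ((k:ℤ)+1)
      have h2 : 0 < Real.exp (-s * 2 ^ ((k:ℤ)+1)) := Real.exp_pos _
      apply div_le_div_of_nonneg_right ?_ ?_ |>.trans_eq rfl
      · linarith
      · linarith
  have := tendsto_const_nhds (α := ℕ) (f := atTop) (x := (1:ℝ)) |>.add hmain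
  simp only [add_zero] at this
  refine this.congr fun k => ?_
  rw [auxg_eq hlam]

lemma auxlim2 {lam s : ℝ} (hlam : 0 < lam) (hs : 0 ≤ s) :
    Filter.Tendsto (fun k : ℕ => auxg lam s (-(k:ℤ))) atTop (𝓝 ((lam+s)/lam)) := by
  set ε : ℕ → ℝ := fun k => (2:ℝ)^(-(k:ℤ)) with hε
  have hεpos : ∀ k, 0 < ε k := fun k => by positivity
  have hε0 : Filter.Tendsto ε atTop (𝓝[≠] (0:ℝ)) := by
    apply tendsto_nhdsWithin_of_tendsto_nhds_of_eventually_within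
    · have : ∀ k : ℕ, ε k = (1/2:ℝ)^k := by
        intro k
        show (2:ℝ)^(-(k:ℤ)) = ((1:ℝ)/2)^k
        rw [zpow_neg, zpow_natCast, one_div, inv_pow]
      rw [funext this]
      exact tendsto_pow_atTop_nhds_zero_of_lt_one (by norm_num) (by norm_num)
    · exact Filter.Eventually.of_forall fun k => ne_of_gt (hεpos k)
  have hD : Filter.Tendsto (fun e : ℝ => (Real.exp (lam*e) - 1)/e) (𝓝[≠] (0:ℝ)) (𝓝 lam) := by
    have hderiv : HasDerivAt (fun x : ℝ => Real.exp (lam * x)) lam 0 := by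
      have := ((hasDerivAt_id (0:ℝ)).const_mul lam).exp
      simpa using this
    have := hasDerivAt_iff_tendsto_slope.mp hderiv
    refine this.congr' ?_
    filter_upwards [self_mem_nhdsWithin] with e he
    rw [slope_def_field]
    simp only [mul_zero, Real.exp_zero, sub_zero]
  have hN : Filter.Tendsto (fun e : ℝ => (1 - Real.exp (-s*e))/e) (𝓝[≠] (0:ℝ)) (𝓝 s) := by
    have hderiv : HasDerivAt (fun x : ℝ => -Real.exp (-s * x)) s 0 := by
      have := (((hasDerivAt_id (0:ℝ)).const_mul (-s)).exp).neg
      simpa [Pi.neg_def] using this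
    have := hasDerivAt_iff_tendsto_slope.mp hderiv
    refine this.congr' ?_
    filter_upwards [self_mem_nhdsWithin] with e he
    rw [slope_def_field]
    simp only [mul_zero, Real.exp_zero, sub_zero]
    ring_nf
  have hdiv : Filter.Tendsto (fun k : ℕ =>
      (1 - Real.exp (-s * ε k)) / (Real.exp (lam * ε k) - 1)) atTop (𝓝 (s / lam)) := by
    have := (hN.comp hε0).div (hD.comp hε0) (ne_of_gt hlam)
    refine this.congr fun k => ?_
    show (1 - Real.exp (-s * ε k))/(ε k) / ((Real.exp (lam * ε k) - 1)/(ε k)) = _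
    rw [div_div_div_comm, div_self (ne_of_gt (hεpos k)), div_one]
  have hfinal := (tendsto_const_nhds (α := ℕ) (f := atTop) (x := (1:ℝ))).add hdiv
  have heq : (1:ℝ) + s / lam = (lam + s)/lam := by field_simp
  rw [heq] at hfinal
  refine hfinal.congr fun k => ?_
  rw [auxg_eq hlam]

lemma auxlim_prod {lam s : ℝ} (hlam : 0 < lam) (hs : 0 ≤ s) :
    Filter.Tendsto (fun k : ℕ => ∏ l ∈ Finset.Icc (-(k:ℤ)) (k:ℤ), auxc lam s l) atTop
      (𝓝 (lam/(lam+s))) := by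
  have hpos : (0:ℝ) < (lam + s)/lam := div_pos (by linarith) hlam
  have := (auxlim1 hlam hs).div (auxlim2 hlam hs) (ne_of_gt hpos)
  have heq : (1:ℝ) / ((lam + s)/lam) = lam/(lam+s) := by
    rw [one_div_div]
  rw [heq] at this
  refine this.congr fun k => ?_
  rw [auxprod hlam hs k]
  rfl

section prob
variable {Ω : Type*} [MeasurableSpace Ω] (μ : Measure Ω) [IsProbabilityMeasure μ]

lemma aux_single_integral (lam : ℝ) (hlam : 0 < lam) (B : ℤ → Ω → ℝ)
    (hmeas : ∀ l, Measurable (B l)) (hval : ∀ l ω, B l ω = 0 ∨ B l ω = 1)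
    (hber : ∀ l : ℤ, μ {ω | B l ω = 1} = ENNReal.ofReal (1 / (1 + Real.exp (lam * 2 ^ l))))
    (s : ℝ) (hs : 0 ≤ s) (l : ℤ) :
    ∫ ω, Real.exp (-s * ((2:ℝ)^l * B l ω)) ∂μ = auxc lam s l := by
  have hEpos : (0:ℝ) < Real.exp (lam * 2 ^ l) := Real.exp_pos _
  have hBint : ∫ ω, B l ω ∂μ = 1 / (1 + Real.exp (lam * 2 ^ l)) := by
    have hms : MeasurableSet {ω | B l ω = 1} := (hmeas l) (measurableSet_singleton 1)
    have heq : B l = Set.indicator {ω | B l ω = 1} (fun _ => (1:ℝ)) := by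
      funext ω
      rcases hval l ω with h | h
      · rw [h, Set.indicator_of_notMem]
        simp only [Set.mem_setOf_eq, h]
        norm_num
      · rw [h, Set.indicator_of_mem]
        exact h
    rw [heq, integral_indicator_const (1:ℝ) hms, measureReal_def, hber l, smul_eq_mul, mul_one,
      ENNReal.toReal_ofReal (by positivity)]
  have hBintble : Integrable (B l) μ := by
    refine (integrable_const (1:ℝ)).mono' (hmeas l).aestronglyMeasurable ?_
    refine Filter.Eventually.of_forall fun ω => ?_
    rcases hval l ω with h | h <;> simp [h]
  have hpoint : ∀ ω, Real.exp (-s * ((2:ℝ)^l * B l ω))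
      = 1 + (Real.exp (-s * 2^l) - 1) * B l ω := by
    intro ω
    rcases hval l ω with h | h <;> rw [h] <;> simp
  simp_rw [hpoint]
  rw [integral_add (integrable_const 1) (hBintble.const_mul _), integral_const,
    integral_const_mul, hBint]
  simp only [probReal_univ, smul_eq_mul, mul_one, one_mul]
  rw [auxc]
  have h1 : (1:ℝ) + Real.exp (lam * 2 ^ l) ≠ 0 := by positivity
  field_simp
  ring

lemma aux_prod_integral (lam : ℝ) (hlam : 0 < lam) (B : ℤ → Ω → ℝ)
    (hmeas : ∀ l, Measurable (B l)) (hval : ∀ l ω, B l ω = 0 ∨ B l ω = 1)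
    (hindep : iIndepFun B μ)
    (hber : ∀ l : ℤ, μ {ω | B l ω = 1} = ENNReal.ofReal (1 / (1 + Real.exp (lam * 2 ^ l))))
    (s : ℝ) (hs : 0 ≤ s) (k : ℕ) :
    ∫ ω, Real.exp (-s * ∑ l ∈ Finset.Icc (-(k:ℤ)) (k:ℤ), (2:ℝ)^l * B l ω) ∂μ
      = ∏ l ∈ Finset.Icc (-(k:ℤ)) (k:ℤ), auxc lam s l := by
  set X : ℤ → Ω → ℝ := fun l ω => (2:ℝ)^l * B l ω with hX
  have hXmeas : ∀ l, Measurable (X l) := fun l => (hmeas l).const_mul _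
  have hXindep : iIndepFun X μ := by
    exact hindep.comp (fun l => fun b : ℝ => (2:ℝ)^l * b) (fun l => measurable_id.const_mul _)
  have hmgf := hXindep.mgf_sum hXmeas (Finset.Icc (-(k:ℤ)) (k:ℤ)) (t := -s)
  have h1 : mgf (∑ l ∈ Finset.Icc (-(k:ℤ)) (k:ℤ), X l) μ (-s)
      = ∫ ω, Real.exp (-s * ∑ l ∈ Finset.Icc (-(k:ℤ)) (k:ℤ), (2:ℝ)^l * B l ω) ∂μ := by
    rw [mgf]
    simp only [Finset.sum_apply]
    rfl
  have h2 : ∀ l ∈ Finset.Icc (-(k:ℤ)) (k:ℤ), mgf (X l) μ (-s) = auxc lam s l := by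
    intro l _
    rw [mgf]
    exact aux_single_integral μ lam hlam B hmeas hval hber s hs l
  rw [← h1, hmgf]
  exact Finset.prod_congr rfl h2

end prob

lemma aux_laplace_S {Ω : Type*} [MeasurableSpace Ω] (μ : Measure Ω) [IsProbabilityMeasure μ]
    (lam : ℝ) (hlam : 0 < lam) (B : ℤ → Ω → ℝ)
    (hmeas : ∀ l, Measurable (B l)) (hval : ∀ l ω, B l ω = 0 ∨ B l ω = 1)
    (hindep : iIndepFun B μ)
    (hber : ∀ l : ℤ, μ {ω | B l ω = 1} = ENNReal.ofReal (1 / (1 + Real.exp (lam * 2 ^ l))))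
    (hsum : ∀ᵐ ω ∂μ, Summable fun l : ℤ => (2 : ℝ) ^ l * B l ω)
    (s : ℝ) (hs : 0 ≤ s) :
    ∫ ω, Real.exp (-s * ∑' l : ℤ, (2:ℝ)^l * B l ω) ∂μ = lam / (lam + s) := by
  have hterm_nonneg : ∀ l ω, 0 ≤ (2:ℝ)^l * B l ω := by
    intro l ω
    rcases hval l ω with h | h <;> rw [h] <;> positivity
  have hFinTend : Filter.Tendsto (fun k : ℕ => Finset.Icc (-(k:ℤ)) (k:ℤ)) atTop atTop := by
    apply tendsto_atTop_finset_of_monotone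
    · intro a b hab
      apply Finset.Icc_subset_Icc <;> omega
    · intro x
      exact ⟨x.natAbs, by simp only [Finset.mem_Icc]; omega⟩
  have hae : ∀ᵐ ω ∂μ, Filter.Tendsto
      (fun k : ℕ => Real.exp (-s * ∑ l ∈ Finset.Icc (-(k:ℤ)) (k:ℤ), (2:ℝ)^l * B l ω)) atTop
      (𝓝 (Real.exp (-s * ∑' l : ℤ, (2:ℝ)^l * B l ω))) := by
    filter_upwards [hsum] with ω hω
    have h1 : Filter.Tendsto (fun k : ℕ => ∑ l ∈ Finset.Icc (-(k:ℤ)) (k:ℤ), (2:ℝ)^l * B l ω)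
        atTop (𝓝 (∑' l : ℤ, (2:ℝ)^l * B l ω)) := hω.hasSum.comp hFinTend
    exact (Real.continuous_exp.continuousAt.tendsto.comp (h1.const_mul (-s))).congr fun k => rfl
  have hsmeas : ∀ k : ℕ, AEStronglyMeasurable
      (fun ω => Real.exp (-s * ∑ l ∈ Finset.Icc (-(k:ℤ)) (k:ℤ), (2:ℝ)^l * B l ω)) μ := by
    intro k
    exact (Real.measurable_exp.comp
      ((Finset.measurable_sum _ (fun l _ => (hmeas l).const_mul _)).const_mul (-s))).aestronglyMeasurable
  have hbound : ∀ k : ℕ, ∀ᵐ ω ∂μ,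
      ‖Real.exp (-s * ∑ l ∈ Finset.Icc (-(k:ℤ)) (k:ℤ), (2:ℝ)^l * B l ω)‖ ≤ 1 := by
    intro k
    refine Filter.Eventually.of_forall fun ω => ?_
    rw [Real.norm_eq_abs, abs_of_pos (Real.exp_pos _)]
    rw [Real.exp_le_one_iff]
    have h0 : 0 ≤ ∑ l ∈ Finset.Icc (-(k:ℤ)) (k:ℤ), (2:ℝ)^l * B l ω :=
      Finset.sum_nonneg fun l _ => hterm_nonneg l ω
    nlinarith
  have hdct := tendsto_integral_of_dominated_convergence (bound := fun _ => (1:ℝ))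
    hsmeas (integrable_const 1) hbound hae
  have hprod : (fun k : ℕ => ∫ ω, Real.exp (-s * ∑ l ∈ Finset.Icc (-(k:ℤ)) (k:ℤ), (2:ℝ)^l * B l ω) ∂μ)
      = fun k : ℕ => ∏ l ∈ Finset.Icc (-(k:ℤ)) (k:ℤ), auxc lam s l := by
    funext k
    exact aux_prod_integral μ lam hlam B hmeas hval hindep hber s hs k
  rw [hprod] at hdct
  exact (tendsto_nhds_unique hdct (auxlim_prod hlam hs)).symm ▸ rfl


theorem stmt_0 {Ω : Type*} [MeasurableSpace Ω] (μ : Measure Ω) [IsProbabilityMeasure μ]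
    (lam : ℝ) (hlam : 0 < lam) (B : ℤ → Ω → ℝ)
    (hmeas : ∀ l, Measurable (B l))
    (hval : ∀ l ω, B l ω = 0 ∨ B l ω = 1)
    (hindep : iIndepFun B μ)
    (hber : ∀ l : ℤ,
      μ {ω | B l ω = 1} = ENNReal.ofReal (1 / (1 + Real.exp (lam * 2 ^ l))))
    (hsum : ∀ᵐ ω ∂μ, Summable fun l : ℤ => (2 : ℝ) ^ l * B l ω) :
    μ.map (fun ω => ∑' l : ℤ, (2 : ℝ) ^ l * B l ω) = expMeasure lam := by
  have hterm : ∀ (l : ℤ) (ω : Ω), 0 ≤ (2:ℝ)^l * B l ω := by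
    intro l ω
    rcases hval l ω with h | h <;> rw [h] <;> positivity
  set S : Ω → ℝ := fun ω => ∑' l : ℤ, (2 : ℝ) ^ l * B l ω with hS
  have hSmeas : Measurable S := by
    have heq : S = fun ω => (∑' l : ℤ, ENNReal.ofReal ((2:ℝ)^l * B l ω)).toReal := by
      funext ω
      rw [ENNReal.tsum_toReal_eq (fun l => ENNReal.ofReal_ne_top)]
      exact tsum_congr fun l => (ENNReal.toReal_ofReal (hterm l ω)).symm
    rw [heq]
    exact (Measurable.ennreal_tsum fun l =>
      ENNReal.measurable_ofReal.comp ((hmeas l).const_mul _)).ennreal_toReal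
  have hSnonneg : ∀ ω, 0 ≤ S ω := fun ω => tsum_nonneg fun l => hterm l ω
  haveI : IsProbabilityMeasure (μ.map S) := Measure.isProbabilityMeasure_map hSmeas.aemeasurable
  haveI : IsProbabilityMeasure (expMeasure lam) := isProbabilityMeasure_expMeasure hlam
  apply aux_laplace_unique
  · rw [Measure.map_apply hSmeas measurableSet_Iio]
    have : S ⁻¹' (Set.Iio 0) = ∅ := by
      rw [Set.eq_empty_iff_forall_notMem]
      intro ω hω
      exact absurd (hSnonneg ω) (not_le.mpr hω)
    rw [this, measure_empty]
  · exact aux_exp_Iio lam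
  · intro n
    have hc : Continuous fun x : ℝ => Real.exp (-(n:ℝ) * x) := by fun_prop
    rw [integral_map hSmeas.aemeasurable hc.aestronglyMeasurable]
    rw [aux_exp_laplace lam hlam (n:ℝ) n.cast_nonneg]
    exact aux_laplace_S μ lam hlam B hmeas hval hindep hber hsum (n:ℝ) n.cast_nonneg
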